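/- Let n, N be positive integers, let W₁,…,W_N ∈ ℂ[x₁,…,xₙ] be nonzero polynomials, let M > 0 be a real constant, let i ∈ {1,…,n}, and let 𝒱 be a finite set of nonzero polynomials in ℂ[x₁,…,xₙ]. Suppose that |v_i/p_i| ≤ M · max_{j=1,…,N} |(dW_j/W_j)(p,v)| holds for every (p,v) ∈ ℂⁿ × ℂⁿ such that p_i ≠ 0, W_j(p) ≠ 0 for all j = 1,…,N, and V(p) ≠ 0 for every V ∈ 𝒱. Then the same inequality |v_i/p_i| ≤ M · max_{j=1,…,N} |(dW_j/W_j)(p,v)| holds for every (p,v) ∈ ℂⁿ × ℂⁿ such that p_i ≠ 0 and W_j(p) ≠ 0 for all j = 1,…,N (i.e., the nonvanishing requirement on the polynomials in 𝒱 can be dropped). -/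

import Mathlib

open MvPolynomial

/-- For `P ∈ ℂ[x₁,…,xₙ]` and `(p,v) ∈ ℂⁿ × ℂⁿ`, the value
`(dP/P)(p,v) = (∑ₖ (∂P/∂xₖ)(p)·vₖ) / P(p)`. -/
noncomputable def dlogC (n : ℕ) (P : MvPolynomial (Fin n) ℂ) (p v : Fin n → ℂ) : ℂ :=
  (∑ k : Fin n, MvPolynomial.eval p (MvPolynomial.pderiv k P) * v k) /
    MvPolynomial.eval p P

/-- The complement of the zero locus of a nonzero polynomial is dense. -/
lemma dense_ne_zero_aux {n : ℕ} (Q : MvPolynomial (Fin n) ℂ) (hQ : Q ≠ 0) :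
    Dense {p : Fin n → ℂ | MvPolynomial.eval p Q ≠ 0} := by
  by_contra h
  rw [dense_iff_closure_eq] at h
  obtain ⟨z₀, hz₀⟩ : ∃ z, z ∉ closure {p : Fin n → ℂ | MvPolynomial.eval p Q ≠ 0} := by
    by_contra h'
    push_neg at h'
    exact h (Set.eq_univ_of_forall h')
  have hopen : IsOpen (closure {p : Fin n → ℂ | MvPolynomial.eval p Q ≠ 0})ᶜ :=
    isClosed_closure.isOpen_compl
  have hsub : (closure {p : Fin n → ℂ | MvPolynomial.eval p Q ≠ 0})ᶜ ⊆
      {p : Fin n → ℂ | MvPolynomial.eval p Q = 0} := by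
    intro x hx
    by_contra hxne
    exact hx (subset_closure hxne)
  have hanal : AnalyticOnNhd ℂ (fun p : Fin n → ℂ => MvPolynomial.eval p Q) Set.univ :=
    AnalyticOnNhd.eval_mvPolynomial Q
  have hev : ∀ᶠ x in nhds z₀, (fun p : Fin n → ℂ => MvPolynomial.eval p Q) x = 0 := by
    filter_upwards [hopen.mem_nhds hz₀] with x hx using hsub hx
  have hall : ∀ p : Fin n → ℂ, MvPolynomial.eval p Q = 0 := fun p =>
    hanal.eqOn_zero_of_preconnected_of_eventuallyEq_zero isPreconnected_univ
      (Set.mem_univ z₀) hev (Set.mem_univ p)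
  exact hQ (MvPolynomial.funext fun x => by simp [hall x])

theorem drop_nonvanishing_condition (n N : ℕ) (hn : 0 < n) (hN : 0 < N)
    (W : Fin N → MvPolynomial (Fin n) ℂ) (hW : ∀ j, W j ≠ 0)
    (M : ℝ) (hM : 0 < M) (i : Fin n)
    (𝒱 : Finset (MvPolynomial (Fin n) ℂ)) (h𝒱 : ∀ V ∈ 𝒱, V ≠ 0)
    (hyp : ∀ p v : Fin n → ℂ, p i ≠ 0 →
      (∀ j, MvPolynomial.eval p (W j) ≠ 0) →
      (∀ V ∈ 𝒱, MvPolynomial.eval p V ≠ 0) →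
      ‖v i / p i‖ ≤
        M * Finset.univ.sup' (Finset.univ_nonempty_iff.mpr (Fin.pos_iff_nonempty.mp hN))
            (fun j => ‖dlogC n (W j) p v‖)) :
    ∀ p v : Fin n → ℂ, p i ≠ 0 →
      (∀ j, MvPolynomial.eval p (W j) ≠ 0) →
      ‖v i / p i‖ ≤
        M * Finset.univ.sup' (Finset.univ_nonempty_iff.mpr (Fin.pos_iff_nonempty.mp hN))
            (fun j => ‖dlogC n (W j) p v‖) := by
  intro p v hp hWp
  set Q : MvPolynomial (Fin n) ℂ := ∏ V ∈ 𝒱, V with hQdef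
  have hQ : Q ≠ 0 := Finset.prod_ne_zero_iff.mpr h𝒱
  have hdense := dense_ne_zero_aux Q hQ
  -- get a sequence converging to p in the dense set
  have hpc : p ∈ closure {q : Fin n → ℂ | MvPolynomial.eval q Q ≠ 0} := hdense p
  obtain ⟨x, hxmem, hxlim⟩ := mem_closure_iff_seq_limit.mp hpc
  -- continuity facts
  have hconti : Filter.Tendsto (fun k => x k i) Filter.atTop (nhds (p i)) :=
    ((continuous_apply i).tendsto p).comp hxlim
  have hcontW : ∀ j : Fin N, Filter.Tendsto (fun k => MvPolynomial.eval (x k) (W j))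
      Filter.atTop (nhds (MvPolynomial.eval p (W j))) := fun j =>
    ((MvPolynomial.continuous_eval (W j)).tendsto p).comp hxlim
  -- eventually all nonvanishing conditions hold along the sequence
  have hev_i : ∀ᶠ k in Filter.atTop, x k i ≠ 0 := hconti.eventually_ne hp
  have hev_W : ∀ᶠ k in Filter.atTop, ∀ j, MvPolynomial.eval (x k) (W j) ≠ 0 :=
    Filter.eventually_all.mpr fun j => (hcontW j).eventually_ne (hWp j)
  have hev_V : ∀ k, ∀ V ∈ 𝒱, MvPolynomial.eval (x k) V ≠ 0 := by
    intro k V hV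
    have := hxmem k
    simp only [Set.mem_setOf_eq, hQdef, map_prod, Finset.prod_ne_zero_iff] at this
    exact this V hV
  -- the inequality holds eventually along the sequence
  have hev : ∀ᶠ k in Filter.atTop,
      ‖v i / x k i‖ ≤
        M * Finset.univ.sup' (Finset.univ_nonempty_iff.mpr (Fin.pos_iff_nonempty.mp hN))
            (fun j => ‖dlogC n (W j) (x k) v‖) := by
    filter_upwards [hev_i, hev_W] with k hk1 hk2
    exact hyp (x k) v hk1 hk2 (hev_V k)
  -- LHS tendsto
  have hlhs : Filter.Tendsto (fun k => ‖v i / x k i‖) Filter.atTop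
      (nhds (‖v i / p i‖)) := by
    have : Filter.Tendsto (fun k => v i / x k i) Filter.atTop (nhds (v i / p i)) :=
      Filter.Tendsto.div tendsto_const_nhds hconti hp
    exact (continuous_norm.tendsto _).comp this
  -- RHS tendsto
  have hrhs : Filter.Tendsto
      (fun k => M * Finset.univ.sup' (Finset.univ_nonempty_iff.mpr (Fin.pos_iff_nonempty.mp hN))
          (fun j => ‖dlogC n (W j) (x k) v‖)) Filter.atTop
      (nhds (M * Finset.univ.sup' (Finset.univ_nonempty_iff.mpr (Fin.pos_iff_nonempty.mp hN))
          (fun j => ‖dlogC n (W j) p v‖))) := by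
    apply Filter.Tendsto.const_mul
    apply Filter.Tendsto.finset_sup'_nhds_apply
    intro j _
    have hnum : Filter.Tendsto
        (fun k => ∑ l : Fin n, MvPolynomial.eval (x k) (MvPolynomial.pderiv l (W j)) * v l)
        Filter.atTop
        (nhds (∑ l : Fin n, MvPolynomial.eval p (MvPolynomial.pderiv l (W j)) * v l)) := by
      apply tendsto_finset_sum
      intro l _
      exact (((MvPolynomial.continuous_eval (MvPolynomial.pderiv l (W j))).tendsto p).comp
        hxlim).mul tendsto_const_nhds
    have hd : Filter.Tendsto (fun k => dlogC n (W j) (x k) v) Filter.atTop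
        (nhds (dlogC n (W j) p v)) := by
      unfold dlogC
      exact Filter.Tendsto.div hnum (hcontW j) (hWp j)
    exact (continuous_norm.tendsto _).comp hd
  exact le_of_tendsto_of_tendsto hlhs hrhs hev
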